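/- (Lower bound for the bias part of the squared parameter norm under random signs.) Let n, p ≥ 1, λ > 0, Σ = VΛVᵀ a p×p symmetric positive-definite matrix with eigenvalues λᵢ > 0 and orthonormal eigenvector matrix V = [v₁,…,v_p], X ∈ ℝ^{n×p}, zᵢ = Xvᵢ/√λᵢ, A_{−i} = XXᵀ − λᵢzᵢzᵢᵀ, and M = (XXᵀ + nλI)^{-1}. Let t ∈ ℝ^p be fixed, let s be a random vector of independent uniform ±1 signs, and set θ = V(s ⊙ t). Then E_s[θᵀXᵀM·XXᵀ·MXθ] = Σ_{i=1}^p tᵢ²λᵢ·zᵢᵀM(XXᵀ)Mzᵢ ≥ Σ_{i=1}^p tᵢ²λᵢ²(zᵢᵀMzᵢ)² = Σ_{i=1}^p tᵢ²·[λᵢzᵢᵀ(A_{−i} + nλI)^{-1}zᵢ / (1 + λᵢzᵢᵀ(A_{−i} + nλI)^{-1}zᵢ)]². -/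

import Mathlib

open Matrix

noncomputable section

variable {n p : ℕ}

/-- `zᵢ = X vᵢ / √λᵢ`. -/
def zvec (lam : Fin p → ℝ) (v : Fin p → Fin p → ℝ) (X : Matrix (Fin n) (Fin p) ℝ)
    (i : Fin p) : Fin n → ℝ :=
  (Real.sqrt (lam i))⁻¹ • X.mulVec (v i)

/-- `A₋ᵢ = X Xᵀ − λᵢ zᵢ zᵢᵀ`. -/
def Ami (lam : Fin p → ℝ) (v : Fin p → Fin p → ℝ) (X : Matrix (Fin n) (Fin p) ℝ)
    (i : Fin p) : Matrix (Fin n) (Fin n) ℝ :=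
  X * Xᵀ - lam i • vecMulVec (zvec lam v X i) (zvec lam v X i)

/-- `B ↦ B + n λ I`. -/
def addReg (lamreg : ℝ) (B : Matrix (Fin n) (Fin n) ℝ) : Matrix (Fin n) (Fin n) ℝ :=
  B + ((n : ℝ) * lamreg) • (1 : Matrix (Fin n) (Fin n) ℝ)

/-- a ±1 sign from a boolean -/
def sgn (b : Bool) : ℝ := if b then 1 else -1

lemma sum_sgn (j k : Fin p) :
    (∑ sb : Fin p → Bool, (if sb j then (1:ℝ) else -1) * (if sb k then 1 else -1)) =
      if j = k then (2:ℝ)^p else 0 := by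
  rcases eq_or_ne j k with rfl | hjk
  · rw [if_pos rfl]
    have : ∀ sb : Fin p → Bool,
        (if sb j then (1:ℝ) else -1) * (if sb j then 1 else -1) = 1 := by
      intro sb; cases sb j <;> norm_num
    simp only [this, Finset.sum_const, Finset.card_univ, Fintype.card_fun, Fintype.card_bool,
      Fintype.card_fin, nsmul_eq_mul, mul_one]
    norm_num
  · rw [if_neg hjk]
    apply Finset.sum_ninvolution (fun sb => Function.update sb j (!(sb j)))
    · intro sb
      have hk : Function.update sb j (!(sb j)) k = sb k := Function.update_of_ne (Ne.symm hjk) _ _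
      have hj : Function.update sb j (!(sb j)) j = !(sb j) := Function.update_self _ _ _
      rw [hj, hk]
      cases sb j <;> cases sb k <;> norm_num
    · intro sb h
      intro hc
      have := congrFun hc j
      rw [Function.update_self] at this
      cases h0 : sb j <;> rw [h0] at this <;> simp at this
    · intro sb; exact Finset.mem_univ _
    · intro sb
      funext x
      rcases eq_or_ne x j with rfl | hx
      · simp [Function.update_self]
      · simp [Function.update_of_ne hx]

lemma vmv_mulVec (a b x : Fin n → ℝ) :
    (vecMulVec a b).mulVec x = (b ⬝ᵥ x) • a := by
  funext i
  simp [vecMulVec_apply, mulVec, dotProduct, Finset.sum_mul, Finset.mul_sum]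
  congr 1; funext j; ring

lemma dot_vmv (x a b y : Fin n → ℝ) (A : Matrix (Fin n) (Fin n) ℝ) :
    x ⬝ᵥ (vecMulVec a b * A).mulVec y = (x ⬝ᵥ a) * (b ⬝ᵥ A.mulVec y) := by
  rw [← mulVec_mulVec, vmv_mulVec, dotProduct_smul, smul_eq_mul]
  ring

lemma vmv_sandwich (z : Fin n → ℝ) (A : Matrix (Fin n) (Fin n) ℝ) :
    vecMulVec z z * A * vecMulVec z z = (z ⬝ᵥ A.mulVec z) • vecMulVec z z := by
  funext i j
  simp only [Matrix.mul_apply, vecMulVec_apply, Matrix.smul_apply, smul_eq_mul, mulVec, dotProduct,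
    Finset.sum_mul, Finset.mul_sum]
  rw [Finset.sum_comm]
  congr 1; funext k
  congr 1; funext l
  ring

-- column of X*V is X applied to column of V
lemma col_XV (X : Matrix (Fin n) (Fin p) ℝ) (V : Matrix (Fin p) (Fin p) ℝ) (i : Fin p) :
    (fun r => (X * V) r i) = X.mulVec (fun j => V j i) := by
  funext r; simp [Matrix.mul_apply, mulVec, dotProduct]

-- u and z relation: X.mulVec (v i) = √λᵢ • z i
lemma u_eq_sqrt_smul (lam : Fin p → ℝ) (hlampos : ∀ i, 0 < lam i)
    (v : Fin p → Fin p → ℝ) (X : Matrix (Fin n) (Fin p) ℝ) (i : Fin p) :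
    X.mulVec (v i) = Real.sqrt (lam i) • zvec lam v X i := by
  rw [zvec, smul_smul, mul_inv_cancel₀ (Real.sqrt_pos.mpr (hlampos i)).ne', one_smul]

lemma decomp (lam : Fin p → ℝ) (hlampos : ∀ i, 0 < lam i)
    (V : Matrix (Fin p) (Fin p) ℝ) (hV : Vᵀ * V = 1)
    (X : Matrix (Fin n) (Fin p) ℝ) (w : Fin n → ℝ) :
    w ⬝ᵥ (X * Xᵀ).mulVec w =
      ∑ j, lam j * (zvec lam (fun i j => V j i) X j ⬝ᵥ w) ^ 2 := by
  have hVV : V * Vᵀ = 1 := by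
    rwa [mul_eq_one_comm] at hV
  have hX : X * Xᵀ = (X * V) * (X * V)ᵀ := by
    rw [Matrix.transpose_mul, ← Matrix.mul_assoc, Matrix.mul_assoc X V Vᵀ, hVV, Matrix.mul_one]
  rw [hX, ← Matrix.mulVec_mulVec, Matrix.mulVec_transpose, Matrix.dotProduct_mulVec]
  have hterm : ∀ j, (w ᵥ* (X * V)) j = Real.sqrt (lam j) * (zvec lam (fun i j => V j i) X j ⬝ᵥ w) := by
    intro j
    have : (w ᵥ* (X * V)) j = X.mulVec (fun k => V k j) ⬝ᵥ w := by
      rw [dotProduct_comm, ← col_XV]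
      rfl
    rw [this, u_eq_sqrt_smul lam hlampos (fun i j => V j i) X j, smul_dotProduct, smul_eq_mul]
  show ∑ j, (w ᵥ* (X * V)) j * (w ᵥ* (X * V)) j = _
  refine Finset.sum_congr rfl fun j _ => ?_
  rw [hterm j]
  have h : Real.sqrt (lam j) * Real.sqrt (lam j) = lam j := Real.mul_self_sqrt (hlampos j).le
  linear_combination (zvec lam (fun i j => V j i) X j ⬝ᵥ w) ^ 2 * h

lemma bilin_expand (W D : Matrix (Fin n) (Fin p) ℝ) (a : Fin p → ℝ) :
    (W *ᵥ a) ⬝ᵥ (D *ᵥ a) = ∑ j, ∑ k, a j * a k * ∑ r, W r j * D r k := by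
  have h : ∀ r : Fin n, (∑ j, W r j * a j) * (∑ k, D r k * a k)
      = ∑ j, ∑ k, (W r j * a j) * (D r k * a k) := fun r => Finset.sum_mul_sum _ _ _ _
  simp only [dotProduct, mulVec, h]
  rw [Finset.sum_comm]
  refine Finset.sum_congr rfl fun j _ => ?_
  rw [Finset.sum_comm]
  refine Finset.sum_congr rfl fun k _ => ?_
  rw [Finset.mul_sum]
  refine Finset.sum_congr rfl fun r _ => by ring

lemma sum_sgn' (j k : Fin p) :
    (∑ sb : Fin p → Bool, sgn (sb j) * sgn (sb k)) = if j = k then (2:ℝ)^p else 0 := by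
  simpa [sgn] using sum_sgn j k

lemma part1 (lam : Fin p → ℝ) (hlampos : ∀ i, 0 < lam i)
    (V : Matrix (Fin p) (Fin p) ℝ) (X : Matrix (Fin n) (Fin p) ℝ)
    (t : Fin p → ℝ) (C : Matrix (Fin n) (Fin n) ℝ) :
    ((2:ℝ)^p)⁻¹ * (∑ sb : Fin p → Bool,
        (X.mulVec (V.mulVec (fun j => sgn (sb j) * t j))) ⬝ᵥ
          C.mulVec (X.mulVec (V.mulVec (fun j => sgn (sb j) * t j)))) =
      ∑ i, t i ^ 2 * lam i *
        (zvec lam (fun i j => V j i) X i ⬝ᵥ C.mulVec (zvec lam (fun i j => V j i) X i)) := by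
  set z := zvec lam (fun i j => V j i) X with hz
  set b : Fin p → Fin p → ℝ := fun j k => ∑ r, (X * V) r j * (C * (X * V)) r k with hb
  have hexp : ∀ sb : Fin p → Bool,
      (X.mulVec (V.mulVec (fun j => sgn (sb j) * t j))) ⬝ᵥ
          C.mulVec (X.mulVec (V.mulVec (fun j => sgn (sb j) * t j)))
        = ∑ j, ∑ k, (sgn (sb j) * t j) * (sgn (sb k) * t k) * b j k := by
    intro sb
    rw [Matrix.mulVec_mulVec, Matrix.mulVec_mulVec]
    exact bilin_expand (X * V) (C * (X * V)) _
  rw [Finset.sum_congr rfl fun sb _ => hexp sb]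
  rw [Finset.sum_comm]
  have hswap : ∀ j : Fin p, (∑ sb : Fin p → Bool, ∑ k, (sgn (sb j) * t j) * (sgn (sb k) * t k) * b j k)
      = ∑ k, ∑ sb : Fin p → Bool, (sgn (sb j) * t j) * (sgn (sb k) * t k) * b j k := fun j =>
    Finset.sum_comm
  rw [Finset.sum_congr rfl fun j _ => hswap j]
  have hinner : ∀ j k : Fin p,
      (∑ sb : Fin p → Bool, (sgn (sb j) * t j) * (sgn (sb k) * t k) * b j k)
        = (if j = k then (2:ℝ)^p else 0) * (t j * t k * b j k) := by
    intro j k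
    rw [← sum_sgn' j k, Finset.sum_mul]
    exact Finset.sum_congr rfl fun sb _ => by ring
  rw [Finset.sum_congr rfl fun j _ => Finset.sum_congr rfl fun k _ => hinner j k]
  have hdiag : ∀ j : Fin p,
      (∑ k, (if j = k then (2:ℝ)^p else 0) * (t j * t k * b j k)) = (2:ℝ)^p * (t j * t j * b j j) := by
    intro j
    have hsplit : ∀ k : Fin p, (if j = k then (2:ℝ)^p else 0) * (t j * t k * b j k)
        = if j = k then (2:ℝ)^p * (t j * t k * b j k) else 0 := by
      intro k; split <;> simp
    rw [Finset.sum_congr rfl fun k _ => hsplit k, Finset.sum_ite_eq]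
    simp
  rw [Finset.sum_congr rfl fun j _ => hdiag j, Finset.mul_sum]
  refine Finset.sum_congr rfl fun j _ => ?_
  have hbjj : b j j = lam j * (z j ⬝ᵥ C.mulVec (z j)) := by
    have hu : (fun r => (X * V) r j) = Real.sqrt (lam j) • z j := by
      rw [col_XV, hz]
      exact u_eq_sqrt_smul lam hlampos (fun i j => V j i) X j
    have hcol : (fun r => (C * (X * V)) r j) = C.mulVec (Real.sqrt (lam j) • z j) := by
      funext r
      rw [← hu]
      simp [Matrix.mul_apply, mulVec, dotProduct]
    have : b j j = (fun r => (X * V) r j) ⬝ᵥ (fun r => (C * (X * V)) r j) := rfl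
    rw [this, hu, hcol, Matrix.mulVec_smul, smul_dotProduct, dotProduct_smul, smul_eq_mul,
      smul_eq_mul, ← mul_assoc, Real.mul_self_sqrt (hlampos j).le]
  rw [hbjj]
  have h2 : ((2:ℝ)^p)⁻¹ * ((2:ℝ)^p) = 1 := inv_mul_cancel₀ (by positivity)
  calc ((2:ℝ)^p)⁻¹ * ((2:ℝ)^p * (t j * t j * (lam j * (z j ⬝ᵥ C.mulVec (z j)))))
      = (((2:ℝ)^p)⁻¹ * ((2:ℝ)^p)) * (t j * t j * (lam j * (z j ⬝ᵥ C.mulVec (z j)))) := by ring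
    _ = t j ^ 2 * lam j * (z j ⬝ᵥ C.mulVec (z j)) := by rw [h2]; ring

lemma herm_of_symm {M : Matrix (Fin n) (Fin n) ℝ} (h : Mᵀ = M) : M.IsHermitian := by
  rw [Matrix.IsHermitian, conjTranspose]
  simp [h, Matrix.map]
  exact h

lemma part2term (lam : Fin p → ℝ) (hlampos : ∀ i, 0 < lam i)
    (V : Matrix (Fin p) (Fin p) ℝ) (hV : Vᵀ * V = 1)
    (X : Matrix (Fin n) (Fin p) ℝ) (M : Matrix (Fin n) (Fin n) ℝ) (hM : Mᵀ = M) (i : Fin p) :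
    lam i * (zvec lam (fun i j => V j i) X i ⬝ᵥ M.mulVec (zvec lam (fun i j => V j i) X i)) ^ 2 ≤
      zvec lam (fun i j => V j i) X i ⬝ᵥ
        (M * (X * Xᵀ) * M).mulVec (zvec lam (fun i j => V j i) X i) := by
  set z := zvec lam (fun i j => V j i) X with hz
  set w := M.mulVec (z i) with hw
  have h1 : z i ⬝ᵥ (M * (X * Xᵀ) * M).mulVec (z i) = w ⬝ᵥ (X * Xᵀ).mulVec w := by
    rw [← Matrix.mulVec_mulVec, ← Matrix.mulVec_mulVec, Matrix.dotProduct_mulVec, ← hw]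
    congr 1
    rw [← hM, Matrix.vecMul_transpose]
  rw [h1, decomp lam hlampos V hV X w]
  have h2 : z i ⬝ᵥ w = z i ⬝ᵥ M.mulVec (z i) := rfl
  calc lam i * (z i ⬝ᵥ M.mulVec (z i)) ^ 2 = lam i * (z i ⬝ᵥ w) ^ 2 := by rw [h2]
    _ ≤ ∑ j, lam j * (z j ⬝ᵥ w) ^ 2 := by
        apply Finset.single_le_sum (f := fun j => lam j * (z j ⬝ᵥ w) ^ 2)
        · intro j _; exact mul_nonneg (hlampos j).le (sq_nonneg _)
        · exact Finset.mem_univ i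

lemma part3term (lamreg : ℝ) (hlam : 0 < lamreg) (hn : 0 < n)
    (lam : Fin p → ℝ) (hlampos : ∀ i, 0 < lam i)
    (V : Matrix (Fin p) (Fin p) ℝ) (hV : Vᵀ * V = 1)
    (X : Matrix (Fin n) (Fin p) ℝ) (i : Fin p) :
    lam i * (zvec lam (fun i j => V j i) X i ⬝ᵥ
        ((addReg lamreg (X * Xᵀ))⁻¹).mulVec (zvec lam (fun i j => V j i) X i)) =
      lam i * (zvec lam (fun i j => V j i) X i ⬝ᵥ
          ((addReg lamreg (Ami lam (fun i j => V j i) X i))⁻¹).mulVec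
            (zvec lam (fun i j => V j i) X i)) /
        (1 + lam i * (zvec lam (fun i j => V j i) X i ⬝ᵥ
          ((addReg lamreg (Ami lam (fun i j => V j i) X i))⁻¹).mulVec
            (zvec lam (fun i j => V j i) X i))) := by
  set z := zvec lam (fun i j => V j i) X with hzdef
  set B := addReg lamreg (Ami lam (fun i j => V j i) X i) with hBdef
  set Z := vecMulVec (z i) (z i) with hZdef
  set l := lam i with hldef
  set c := z i ⬝ᵥ B⁻¹.mulVec (z i) with hcdef
  have hreg : (0:ℝ) < (n : ℝ) * lamreg := by positivity
  -- B is positive definite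
  have hAmiT : (Ami lam (fun i j => V j i) X i)ᵀ = Ami lam (fun i j => V j i) X i := by
    rw [Ami, transpose_sub, transpose_mul, transpose_transpose, transpose_smul]
    congr 2
    funext a b
    simp [vecMulVec_apply, transpose_apply]
    ring
  have hAmiPSD : (Ami lam (fun i j => V j i) X i).PosSemidef := by
    refine PosSemidef.of_dotProduct_mulVec_nonneg (herm_of_symm hAmiT) fun x => ?_
    rw [star_trivial]
    rw [Ami, sub_mulVec, dotProduct_sub, smul_mulVec, dotProduct_smul, ← hZdef,
      vmv_mulVec, dotProduct_smul, smul_eq_mul, smul_eq_mul,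
      decomp lam hlampos V hV X x]
    have hle : l * ((z i ⬝ᵥ x) * (x ⬝ᵥ z i)) ≤ ∑ j, lam j * (z j ⬝ᵥ x) ^ 2 := by
      have : l * ((z i ⬝ᵥ x) * (x ⬝ᵥ z i)) = lam i * (z i ⬝ᵥ x) ^ 2 := by
        rw [dotProduct_comm x (z i)]; ring
      rw [this]
      apply Finset.single_le_sum (f := fun j => lam j * (z j ⬝ᵥ x) ^ 2)
      · intro j _; exact mul_nonneg (hlampos j).le (sq_nonneg _)
      · exact Finset.mem_univ i
    linarith
  have hBT : Bᵀ = B := by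
    rw [hBdef, addReg, transpose_add, hAmiT, transpose_smul, transpose_one]
  have hBpd : B.PosDef := by
    rw [hBdef, addReg]
    refine Matrix.PosDef.posSemidef_add hAmiPSD (PosDef.of_dotProduct_mulVec_pos (herm_of_symm (by rw [transpose_smul, transpose_one])) ?_)
    intro x hx
    rw [star_trivial, smul_mulVec, dotProduct_smul, smul_eq_mul, one_mulVec]
    have hxx : 0 < x ⬝ᵥ x := by
      rcases lt_or_eq_of_le (Finset.sum_nonneg fun r _ => mul_self_nonneg (x r)) with h | h
      · exact h
      · exact absurd (dotProduct_self_eq_zero.mp h.symm) hx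
    positivity
  have hBB : B * B⁻¹ = 1 := Matrix.mul_nonsing_inv _ hBpd.det_pos.ne'.isUnit
  have hc0 : 0 ≤ c := by
    have := hBpd.inv.posSemidef.dotProduct_mulVec_nonneg (z i)
    rwa [star_trivial] at this
  have h1c : (0:ℝ) < 1 + l * c := by
    have : 0 ≤ l * c := mul_nonneg (hlampos i).le hc0
    linarith
  set γ := l / (1 + l * c) with hγdef
  set N := B⁻¹ - γ • (B⁻¹ * Z * B⁻¹) with hNdef
  have hZBZ : Z * (B⁻¹ * Z * B⁻¹) = c • (Z * B⁻¹) := by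
    calc Z * (B⁻¹ * Z * B⁻¹) = (Z * B⁻¹ * Z) * B⁻¹ := by
          simp only [← Matrix.mul_assoc]
      _ = ((z i ⬝ᵥ B⁻¹.mulVec (z i)) • Z) * B⁻¹ := by rw [hZdef, vmv_sandwich]
      _ = c • (Z * B⁻¹) := by rw [← hcdef, Matrix.smul_mul]
  have hN : (B + l • Z) * N = 1 := by
    have hBN : B * N = 1 - γ • (Z * B⁻¹) := by
      rw [hNdef, Matrix.mul_sub, hBB, Matrix.mul_smul]
      congr 2
      rw [← Matrix.mul_assoc, ← Matrix.mul_assoc, hBB, Matrix.one_mul]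
    have hZN : Z * N = Z * B⁻¹ - (γ * c) • (Z * B⁻¹) := by
      rw [hNdef, Matrix.mul_sub, Matrix.mul_smul, hZBZ, smul_smul, mul_comm γ c, mul_comm c γ]
    rw [Matrix.add_mul, hBN, Matrix.smul_mul, hZN, smul_sub, smul_smul]
    have key : l - γ - l * (γ * c) = 0 := by
      rw [hγdef]; field_simp; ring
    have : l • (Z * B⁻¹) - (l * (γ * c)) • (Z * B⁻¹) - γ • (Z * B⁻¹) = 0 := by
      rw [← sub_smul, ← sub_smul]
      have : l - l * (γ * c) - γ = 0 := by linarith [key]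
      rw [this, zero_smul]
    calc 1 - γ • (Z * B⁻¹) + (l • (Z * B⁻¹) - (l * (γ * c)) • (Z * B⁻¹))
        = 1 + (l • (Z * B⁻¹) - (l * (γ * c)) • (Z * B⁻¹) - γ • (Z * B⁻¹)) := by abel
      _ = 1 := by rw [this, add_zero]
  have hsum : B + l • Z = addReg lamreg (X * Xᵀ) := by
    rw [hBdef, addReg, addReg, Ami, hZdef, hzdef]
    abel
  have hMN : (addReg lamreg (X * Xᵀ))⁻¹ = N := by
    rw [← hsum]
    exact Matrix.inv_eq_right_inv hN
  rw [hMN, hNdef]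
  have hq : z i ⬝ᵥ (B⁻¹ - γ • (B⁻¹ * Z * B⁻¹)).mulVec (z i) = c - γ * (c * c) := by
    rw [sub_mulVec, dotProduct_sub, smul_mulVec, dotProduct_smul, smul_eq_mul, ← hcdef]
    congr 1
    rw [← Matrix.mulVec_mulVec, ← Matrix.mulVec_mulVec, hZdef, vmv_mulVec, ← hcdef,
      Matrix.mulVec_smul, dotProduct_smul, smul_eq_mul]
  rw [hq, hγdef]
  have hne : (1:ℝ) + l * c ≠ 0 := h1c.ne'
  field_simp
  ring_nf

/-- lower bound for the bias part of the squared parameter norm under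
random signs: with `M = (XXᵀ + nλI)⁻¹` and `θ = V(s ⊙ t)` for independent uniform
signs, `E_s[θᵀXᵀM (XXᵀ) M X θ] = Σᵢ tᵢ² λᵢ zᵢᵀ M (XXᵀ) M zᵢ
  ≥ Σᵢ tᵢ² λᵢ² (zᵢᵀMzᵢ)² = Σᵢ tᵢ² (λᵢ zᵢᵀ(A₋ᵢ+nλI)⁻¹zᵢ/(1 + λᵢ zᵢᵀ(A₋ᵢ+nλI)⁻¹zᵢ))²`. -/
theorem statement18 (lamreg : ℝ) (hlam : 0 < lamreg)
    (lam : Fin p → ℝ) (hlampos : ∀ i, 0 < lam i)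
    (V : Matrix (Fin p) (Fin p) ℝ) (hV : Vᵀ * V = 1)
    (X : Matrix (Fin n) (Fin p) ℝ) (t : Fin p → ℝ) :
    (fun (v : Fin p → Fin p → ℝ) (Mreg : Matrix (Fin n) (Fin n) ℝ)
        (z : Fin p → Fin n → ℝ) =>
      (((2 : ℝ) ^ p)⁻¹ *
          (∑ sb : Fin p → Bool,
            (X.mulVec (V.mulVec (fun j => sgn (sb j) * t j))) ⬝ᵥ
              (Mreg * (X * Xᵀ) * Mreg).mulVec
                (X.mulVec (V.mulVec (fun j => sgn (sb j) * t j)))) =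
        (∑ i : Fin p, t i ^ 2 * lam i *
          (z i ⬝ᵥ (Mreg * (X * Xᵀ) * Mreg).mulVec (z i)))) ∧
      ((∑ i : Fin p, t i ^ 2 * lam i ^ 2 * (z i ⬝ᵥ Mreg.mulVec (z i)) ^ 2) ≤
        (∑ i : Fin p, t i ^ 2 * lam i *
          (z i ⬝ᵥ (Mreg * (X * Xᵀ) * Mreg).mulVec (z i)))) ∧
      ((∑ i : Fin p, t i ^ 2 * lam i ^ 2 * (z i ⬝ᵥ Mreg.mulVec (z i)) ^ 2) =
        (∑ i : Fin p, t i ^ 2 *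
          (lam i * (z i ⬝ᵥ (addReg lamreg (Ami lam v X i))⁻¹.mulVec (z i)) /
            (1 + lam i * (z i ⬝ᵥ (addReg lamreg (Ami lam v X i))⁻¹.mulVec (z i)))) ^ 2)))
      (fun i j => V j i)
      ((addReg lamreg (X * Xᵀ))⁻¹)
      (zvec lam (fun i j => V j i) X) := by
  refine ⟨?_, ?_, ?_⟩
  · exact part1 lam hlampos V X t _
  · apply Finset.sum_le_sum
    intro i _
    have hMsymm : ((addReg lamreg (X * Xᵀ))⁻¹)ᵀ = (addReg lamreg (X * Xᵀ))⁻¹ := by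
      rw [Matrix.transpose_nonsing_inv]
      congr 1
      rw [addReg, transpose_add, transpose_mul, transpose_transpose, transpose_smul,
        transpose_one]
    have h := part2term lam hlampos V hV X _ hMsymm i
    calc t i ^ 2 * lam i ^ 2 *
          (zvec lam (fun i j => V j i) X i ⬝ᵥ
            ((addReg lamreg (X * Xᵀ))⁻¹).mulVec (zvec lam (fun i j => V j i) X i)) ^ 2
        = t i ^ 2 * lam i *
            (lam i * (zvec lam (fun i j => V j i) X i ⬝ᵥ
              ((addReg lamreg (X * Xᵀ))⁻¹).mulVec (zvec lam (fun i j => V j i) X i)) ^ 2) := by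
          ring
      _ ≤ t i ^ 2 * lam i *
            (zvec lam (fun i j => V j i) X i ⬝ᵥ
              ((addReg lamreg (X * Xᵀ))⁻¹ * (X * Xᵀ) * (addReg lamreg (X * Xᵀ))⁻¹).mulVec
                (zvec lam (fun i j => V j i) X i)) := by
          refine mul_le_mul_of_nonneg_left h ?_
          have := (hlampos i).le
          positivity
  · rcases Nat.eq_zero_or_pos n with hn | hn
    · subst hn
      refine Finset.sum_congr rfl fun i _ => ?_
      simp [dotProduct]
    · refine Finset.sum_congr rfl fun i _ => ?_
      have h := part3term lamreg hlam hn lam hlampos V hV X i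
      calc t i ^ 2 * lam i ^ 2 *
            (zvec lam (fun i j => V j i) X i ⬝ᵥ
              ((addReg lamreg (X * Xᵀ))⁻¹).mulVec (zvec lam (fun i j => V j i) X i)) ^ 2
          = t i ^ 2 * (lam i *
              (zvec lam (fun i j => V j i) X i ⬝ᵥ
                ((addReg lamreg (X * Xᵀ))⁻¹).mulVec (zvec lam (fun i j => V j i) X i))) ^ 2 := by
            ring
        _ = _ := by rw [h]

end
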